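/- Let L be a locally compact Hausdorff space. The Banach space C₀(L, ℂ) is almost transitive if and only if it is both almost positive transitive and admits almost polar decompositions. -/

import Mathlib

open ZeroAtInfty

/-- The pointwise absolute value (as a complex-valued function) of an element
of `C₀(L, ℂ)`. -/
noncomputable def absC0 {L : Type*} [TopologicalSpace L] (f : C₀(L, ℂ)) : C₀(L, ℂ) where
  toFun := fun x => (‖f x‖ : ℂ)
  continuous_toFun := Complex.continuous_ofReal.comp (f.continuous.norm)
  zero_at_infty' := by
    have h := zero_at_infty f
    have hc : Filter.Tendsto (fun z : ℂ => ((‖z‖ : ℝ) : ℂ)) (nhds 0) (nhds 0) := by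
      exact ((Complex.continuous_ofReal.comp continuous_norm).tendsto (0 : ℂ)).mono_right
        (le_of_eq (by simp))
    exact hc.comp h

/-- `C₀(L, ℂ)` is almost transitive. -/
def AlmostTransitiveC0 (L : Type*) [TopologicalSpace L] : Prop :=
  ∀ ε > (0 : ℝ), ∀ f g : C₀(L, ℂ), ‖f‖ = 1 → ‖g‖ = 1 →
    ∃ T : C₀(L, ℂ) ≃ₗᵢ[ℂ] C₀(L, ℂ), ‖T f - g‖ < ε

/-- `C₀(L, ℂ)` is almost positive transitive: unit vectors that are pointwise
nonnegative real can be approximately mapped to each other by surjective linear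
isometries. -/
def AlmostPositiveTransitiveC0 (L : Type*) [TopologicalSpace L] : Prop :=
  ∀ ε > (0 : ℝ), ∀ f g : C₀(L, ℂ), ‖f‖ = 1 → ‖g‖ = 1 →
    (∀ x, (f x).im = 0 ∧ 0 ≤ (f x).re) → (∀ x, (g x).im = 0 ∧ 0 ≤ (g x).re) →
    ∃ T : C₀(L, ℂ) ≃ₗᵢ[ℂ] C₀(L, ℂ), ‖T f - g‖ < ε

/-- `C₀(L, ℂ)` admits almost polar decompositions. -/
noncomputable def AdmitsAlmostPolarDecompositionsC0 (L : Type*) [TopologicalSpace L] : Prop :=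
  ∀ ε > (0 : ℝ), ∀ f : C₀(L, ℂ),
    ∃ T : C₀(L, ℂ) ≃ₗᵢ[ℂ] C₀(L, ℂ), ‖T (absC0 f) - f‖ < ε

lemma norm_absC0 {L : Type*} [TopologicalSpace L] (f : C₀(L, ℂ)) : ‖absC0 f‖ = ‖f‖ := by
  rw [← ZeroAtInftyContinuousMap.norm_toBCF_eq_norm, ← ZeroAtInftyContinuousMap.norm_toBCF_eq_norm]
  have hpt : ∀ x, ‖(absC0 f) x‖ = ‖f x‖ := fun x => by simp [absC0]
  apply le_antisymm
  · apply (BoundedContinuousFunction.norm_le (f := (absC0 f).toBCF) (norm_nonneg f.toBCF)).2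
    intro x
    rw [show ((absC0 f).toBCF x) = (absC0 f) x from rfl, hpt x]
    exact BoundedContinuousFunction.norm_coe_le_norm f.toBCF x
  · apply (BoundedContinuousFunction.norm_le (f := f.toBCF) (norm_nonneg (absC0 f).toBCF)).2
    intro x
    rw [show (f.toBCF x) = f x from rfl, ← hpt x]
    exact BoundedContinuousFunction.norm_coe_le_norm (absC0 f).toBCF x

theorem stmt1 (L : Type*) [TopologicalSpace L] [LocallyCompactSpace L] [T2Space L] :
    AlmostTransitiveC0 L ↔
      (AlmostPositiveTransitiveC0 L ∧ AdmitsAlmostPolarDecompositionsC0 L) := by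
  constructor
  · intro h
    constructor
    · intro ε hε f g hf hg _ _
      exact h ε hε f g hf hg
    · intro ε hε f
      by_cases hf0 : f = 0
      · subst hf0
        refine ⟨LinearIsometryEquiv.refl ℂ _, ?_⟩
        have habs : absC0 (0 : C₀(L, ℂ)) = 0 := by ext x; simp [absC0]
        simpa [habs] using hε
      · have hfn : (0:ℝ) < ‖f‖ := norm_pos_iff.2 hf0
        set c : ℂ := ((‖f‖⁻¹ : ℝ) : ℂ) with hc
        have hcn : ‖c‖ = ‖f‖⁻¹ := by
          rw [hc, Complex.norm_real]
          exact abs_of_pos (inv_pos.2 hfn)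
        have hs1 : ‖c • absC0 f‖ = ‖c‖ * ‖absC0 f‖ := norm_smul c (absC0 f)
        have hs2 : ‖c • f‖ = ‖c‖ * ‖f‖ := norm_smul c f
        have h1 : ‖c • absC0 f‖ = 1 := by
          rw [hs1, hcn, norm_absC0]; field_simp
        have h2 : ‖c • f‖ = 1 := by
          rw [hs2, hcn]; field_simp
        obtain ⟨T, hT⟩ := h (ε / ‖f‖) (div_pos hε hfn) (c • absC0 f) (c • f) h1 h2
        refine ⟨T, ?_⟩
        have hmap : T (c • absC0 f) = c • T (absC0 f) := map_smul T c (absC0 f)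
        have hsub : c • (T (absC0 f) - f) = c • T (absC0 f) - c • f :=
          smul_sub c (T (absC0 f)) f
        have key : T (c • absC0 f) - c • f = c • (T (absC0 f) - f) := by
          rw [hmap, hsub]
        have hs3 : ‖c • (T (absC0 f) - f)‖ = ‖c‖ * ‖T (absC0 f) - f‖ :=
          norm_smul c (T (absC0 f) - f)
        rw [key, hs3, hcn] at hT
        calc ‖T (absC0 f) - f‖ = ‖f‖ * (‖f‖⁻¹ * ‖T (absC0 f) - f‖) := by
              field_simp
          _ < ‖f‖ * (ε / ‖f‖) := mul_lt_mul_of_pos_left hT hfn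
          _ = ε := by field_simp
  · rintro ⟨hpos, hpolar⟩ ε hε f g hf hg
    obtain ⟨T₁, hT₁⟩ := hpolar (ε/3) (by linarith) f
    obtain ⟨T₂, hT₂⟩ := hpolar (ε/3) (by linarith) g
    have habsf : ‖absC0 f‖ = 1 := by rw [norm_absC0, hf]
    have habsg : ‖absC0 g‖ = 1 := by rw [norm_absC0, hg]
    obtain ⟨S, hS⟩ := hpos (ε/3) (by linarith) (absC0 f) (absC0 g) habsf habsg
      (fun x => by constructor <;> simp [absC0]) (fun x => by constructor <;> simp [absC0])
    refine ⟨(T₁.symm.trans S).trans T₂, ?_⟩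
    have e1 : ‖T₁.symm f - absC0 f‖ < ε/3 := by
      have hmap : T₁ (T₁.symm f - absC0 f) = f - T₁ (absC0 f) := by
        rw [map_sub, T₁.apply_symm_apply]
      calc ‖T₁.symm f - absC0 f‖ = ‖T₁ (T₁.symm f - absC0 f)‖ := (T₁.norm_map _).symm
        _ = ‖f - T₁ (absC0 f)‖ := by rw [hmap]
        _ = ‖T₁ (absC0 f) - f‖ := norm_sub_rev _ _
        _ < ε/3 := hT₁
    have m1 : ‖T₂ (S (T₁.symm f)) - T₂ (S (absC0 f))‖ = ‖T₁.symm f - absC0 f‖ := by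
      rw [← map_sub, T₂.norm_map, ← map_sub, S.norm_map]
    have m2 : ‖T₂ (S (absC0 f)) - T₂ (absC0 g)‖ = ‖S (absC0 f) - absC0 g‖ := by
      rw [← map_sub, T₂.norm_map]
    calc ‖((T₁.symm.trans S).trans T₂) f - g‖
        = ‖T₂ (S (T₁.symm f)) - g‖ := rfl
      _ ≤ ‖T₂ (S (T₁.symm f)) - T₂ (S (absC0 f))‖ + ‖T₂ (S (absC0 f)) - T₂ (absC0 g)‖
          + ‖T₂ (absC0 g) - g‖ := by
            have := dist_triangle4 (T₂ (S (T₁.symm f))) (T₂ (S (absC0 f))) (T₂ (absC0 g)) g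
            simpa [dist_eq_norm] using this
      _ = ‖T₁.symm f - absC0 f‖ + ‖S (absC0 f) - absC0 g‖ + ‖T₂ (absC0 g) - g‖ := by
            rw [m1, m2]
      _ < ε/3 + ε/3 + ε/3 := add_lt_add (add_lt_add e1 hS) hT₂
      _ = ε := by ring
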